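/- Let θ be a second-order stationary point of the Kuramoto energy on a graph G (i.e., ∇E(θ) = 0 and Hess E(θ) ⪰ 0). Then for each vertex i, either ∑_{j ∈ N(i)} v_j = 0, or ∑_{j ∈ N(i)} v_j = μ_i v_i for some μ_i > 0, where v_k = (cos θ_k, sin θ_k). -/

import Mathlib

open Real Classical

noncomputable section

/-- Real-valued adjacency indicator of a simple graph. -/
def adjW {V : Type*} (G : SimpleGraph V) (i j : V) : ℝ := if G.Adj i j then 1 else 0

/-- The phasor (unit vector in the plane) associated with an angle. -/
def phasor (t : ℝ) : ℝ × ℝ := (Real.cos t, Real.sin t)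

/-- The Kuramoto energy. -/
def kEnergy {V : Type*} [Fintype V] (G : SimpleGraph V) (θ : V → ℝ) : ℝ :=
  (1 / 2) * ∑ i, ∑ j, adjW G i j * (1 - Real.cos (θ i - θ j))

/-- The Hessian of the Kuramoto energy. -/
def kHess {V : Type*} [Fintype V] (G : SimpleGraph V) (θ : V → ℝ) : Matrix V V ℝ :=
  fun i j =>
    if i = j then ∑ k, adjW G i k * Real.cos (θ i - θ k)
    else -(adjW G i j * Real.cos (θ i - θ j))

/-- First-order (equilibrium) condition of the homogeneous Kuramoto model. -/
def IsEquilibrium {V : Type*} [Fintype V] (G : SimpleGraph V) (θ : V → ℝ) : Prop :=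
  ∀ i, ∑ j, adjW G i j * Real.sin (θ j - θ i) = 0

/-- Second-order stationary point of the Kuramoto energy. -/
def IsSOSP {V : Type*} [Fintype V] (G : SimpleGraph V) (θ : V → ℝ) : Prop :=
  IsEquilibrium G θ ∧ (kHess G θ).PosSemidef

theorem sosp_neighbor_sum_zero_or_positively_aligned
    {n : ℕ} (G : SimpleGraph (Fin n)) (θ : Fin n → ℝ)
    (hsosp : IsSOSP G θ) :
    ∀ i, (∑ j, adjW G i j • phasor (θ j)) = 0 ∨
      ∃ μ : ℝ, 0 < μ ∧ ∑ j, adjW G i j • phasor (θ j) = μ • phasor (θ i) := by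
  intro i
  obtain ⟨heq, hpsd⟩ := hsosp
  set μ : ℝ := ∑ k, adjW G i k * Real.cos (θ i - θ k) with hμ
  have hμ0 : 0 ≤ μ := by
    have h := hpsd.dotProduct_mulVec_nonneg (Pi.single i 1)
    simp only [Matrix.mulVec, dotProduct, kHess, Pi.star_apply, Pi.single_apply, star_trivial,
      mul_ite, mul_one, mul_zero, ite_mul, one_mul, zero_mul] at h
    rwa [Finset.sum_ite_eq' Finset.univ i, if_pos (Finset.mem_univ i),
      Finset.sum_ite_eq' Finset.univ i, if_pos (Finset.mem_univ i), if_pos rfl] at h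
  have h1 : ∑ j, adjW G i j * Real.sin (θ j - θ i) = 0 := heq i
  have hfst : ∑ j, adjW G i j * Real.cos (θ j) = μ * Real.cos (θ i) := by
    have key : ∀ j, adjW G i j * Real.cos (θ j) =
        (adjW G i j * Real.cos (θ i - θ j)) * Real.cos (θ i)
        - (adjW G i j * Real.sin (θ j - θ i)) * Real.sin (θ i) := by
      intro j
      rw [Real.cos_sub, Real.sin_sub]
      linear_combination (-(adjW G i j * Real.cos (θ j))) * (Real.sin_sq_add_cos_sq (θ i))
    calc ∑ j, adjW G i j * Real.cos (θ j)
        = ∑ j, ((adjW G i j * Real.cos (θ i - θ j)) * Real.cos (θ i)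
            - (adjW G i j * Real.sin (θ j - θ i)) * Real.sin (θ i)) :=
          Finset.sum_congr rfl (fun j _ => key j)
      _ = (∑ j, adjW G i j * Real.cos (θ i - θ j)) * Real.cos (θ i)
            - (∑ j, adjW G i j * Real.sin (θ j - θ i)) * Real.sin (θ i) := by
          rw [Finset.sum_sub_distrib, Finset.sum_mul, Finset.sum_mul]
      _ = μ * Real.cos (θ i) := by rw [h1, hμ]; ring
  have hsnd : ∑ j, adjW G i j * Real.sin (θ j) = μ * Real.sin (θ i) := by
    have key : ∀ j, adjW G i j * Real.sin (θ j) =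
        (adjW G i j * Real.cos (θ i - θ j)) * Real.sin (θ i)
        + (adjW G i j * Real.sin (θ j - θ i)) * Real.cos (θ i) := by
      intro j
      rw [Real.cos_sub, Real.sin_sub]
      linear_combination (-(adjW G i j * Real.sin (θ j))) * (Real.sin_sq_add_cos_sq (θ i))
    calc ∑ j, adjW G i j * Real.sin (θ j)
        = ∑ j, ((adjW G i j * Real.cos (θ i - θ j)) * Real.sin (θ i)
            + (adjW G i j * Real.sin (θ j - θ i)) * Real.cos (θ i)) :=
          Finset.sum_congr rfl (fun j _ => key j)
      _ = (∑ j, adjW G i j * Real.cos (θ i - θ j)) * Real.sin (θ i)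
            + (∑ j, adjW G i j * Real.sin (θ j - θ i)) * Real.cos (θ i) := by
          rw [Finset.sum_add_distrib, Finset.sum_mul, Finset.sum_mul]
      _ = μ * Real.sin (θ i) := by rw [h1, hμ]; ring
  have hsum : ∑ j, adjW G i j • phasor (θ j) = μ • phasor (θ i) := by
    apply Prod.ext
    · simpa [phasor, Prod.fst_sum] using hfst
    · simpa [phasor, Prod.snd_sum] using hsnd
  rcases eq_or_lt_of_le hμ0 with h | h
  · left; rw [hsum, ← h, zero_smul]
  · right; exact ⟨μ, h, hsum⟩
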